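/- Let b ≥ 1, n ≥ 2, and let c : {1, …, n} → ℕ satisfy c(i) < 2^b for all i and c(i) ≠ c(i+1) for all 1 ≤ i < n. For each i with 1 ≤ i ≤ n−1, let k(i) be the least bit position (0-indexed) at which the binary representations of c(i) and c(i+1) differ, and define c'(i) = 2·k(i) + bit_{k(i)}(c(i)), where bit_k(x) denotes the k-th binary digit of x. Then c'(i) < 2b for all 1 ≤ i ≤ n−1, and c'(i) ≠ c'(i+1) for all 1 ≤ i ≤ n−2. -/
import Mathlib


/-- **One round of deterministic coin flipping / color reduction.**
`c : ℕ → ℕ` is a coloring of the 1-indexed vertices `1,…,n` of a path with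
colors `< 2^b` in which adjacent colors differ.  For `1 ≤ i ≤ n−1`, `k i` is
the least bit position at which `c i` and `c (i+1)` differ, and
`c' i = 2 * k i + bit_{k i}(c i)`.  Then `c'` is a proper coloring of the
path on `1,…,n−1` with colors `< 2b`. -/
theorem color_reduction (b n : ℕ) (hb : 1 ≤ b) (hn : 2 ≤ n) (c : ℕ → ℕ)
    (hbound : ∀ i, 1 ≤ i → i ≤ n → c i < 2 ^ b)
    (hproper : ∀ i, 1 ≤ i → i < n → c i ≠ c (i + 1))
    (k : ℕ → ℕ)
    (hk : ∀ i, 1 ≤ i → i < n →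
      (Nat.testBit (c i) (k i) ≠ Nat.testBit (c (i + 1)) (k i)) ∧
      (∀ t < k i, Nat.testBit (c i) t = Nat.testBit (c (i + 1)) t))
    (c' : ℕ → ℕ)
    (hc' : ∀ i, 1 ≤ i → i < n →
      c' i = 2 * k i + (Nat.testBit (c i) (k i)).toNat) :
    (∀ i, 1 ≤ i → i < n → c' i < 2 * b) ∧
    (∀ i, 1 ≤ i → i + 1 < n → c' i ≠ c' (i + 1)) := by
  have hklt : ∀ i, 1 ≤ i → i < n → k i < b := by
    intro i h1 h2
    by_contra h
    push_neg at h
    have h1' := Nat.testBit_lt_two_pow (lt_of_lt_of_le (hbound i h1 (le_of_lt h2))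
      (Nat.pow_le_pow_right (by norm_num) h))
    have h2' := Nat.testBit_lt_two_pow (lt_of_lt_of_le (hbound (i+1) (by omega) (by omega))
      (Nat.pow_le_pow_right (by norm_num) h))
    exact (hk i h1 h2).1 (h1'.trans h2'.symm)
  constructor
  · intro i h1 h2
    rw [hc' i h1 h2]
    have := hklt i h1 h2
    have : (Nat.testBit (c i) (k i)).toNat ≤ 1 := Bool.toNat_le _
    omega
  · intro i h1 h2
    rw [hc' i h1 (by omega), hc' (i+1) (by omega) h2]
    intro heq
    have ht1 : (Nat.testBit (c i) (k i)).toNat ≤ 1 := Bool.toNat_le _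
    have ht2 : (Nat.testBit (c (i+1)) (k (i+1))).toNat ≤ 1 := Bool.toNat_le _
    have hkk : k i = k (i+1) := by omega
    have hbb : (Nat.testBit (c i) (k i)).toNat = (Nat.testBit (c (i+1)) (k (i+1))).toNat := by
      omega
    have hbb' : Nat.testBit (c i) (k i) = Nat.testBit (c (i+1)) (k i) := by
      rw [hkk] at hbb ⊢
      revert hbb; cases h1 : Nat.testBit (c i) (k (i+1)) <;> cases h2 : Nat.testBit (c (i+1)) (k (i+1)) <;> simp
    exact (hk i h1 (by omega)).1 hbb'
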